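/- There exists a constant C > 0 depending only on α and β (one may take C = 5|α|/8) with the following property: for all real numbers ξ₁, ξ₂, τ₁, τ₂, setting ξ = ξ₁ + ξ₂, τ = τ₁ + τ₂, σ = τ + φ(ξ), σ₁ = τ₁ + φ(ξ₁), σ₂ = τ₂ + φ(ξ₂), if |ξ| ≥ 2a or |ξ₁| ≥ 2a, then max{|σ|, |σ₁|, |σ₂|} ≥ C · |ξ| · |ξ₁| · |ξ₂| · max{ξ², ξ₁²}. -/

import Mathlib

open MeasureTheory

noncomputable section

/-- The Kawahara phase function φ(ξ) = αξ⁵ − βξ³. -/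
def kPhi (α β ξ : ℝ) : ℝ := α * ξ ^ 5 - β * ξ ^ 3

/-- Space-time Fourier transform 𝓕u(ξ,τ) = (2π)⁻¹ ∫ e^{-i(xξ+tτ)} u(x,t) dx dt. -/
def FT2 (u : ℝ × ℝ → ℂ) (ξ τ : ℝ) : ℂ :=
  ((1 / (2 * Real.pi) : ℝ) : ℂ) *
    ∫ p : ℝ × ℝ, Complex.exp (-Complex.I * ((p.1 * ξ + p.2 * τ : ℝ) : ℂ)) * u p

/-- Bourgain norm ‖u‖_{X_{s,b}} associated with the Kawahara equation. -/
def XsbNorm (α β s b : ℝ) (u : ℝ × ℝ → ℂ) : ℝ :=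
  (∫ q : ℝ × ℝ, (1 + q.1 ^ 2) ^ s * (1 + (q.2 + kPhi α β q.1) ^ 2) ^ b *
    ‖FT2 u q.1 q.2‖ ^ 2) ^ ((1 : ℝ) / 2)

/-- Spatial Fourier transform 𝓕ₓf(ξ) = (2π)^{-1/2} ∫ e^{-ixξ} f(x) dx. -/
def FT1 (f : ℝ → ℂ) (ξ : ℝ) : ℂ :=
  (((Real.sqrt (2 * Real.pi))⁻¹ : ℝ) : ℂ) *
    ∫ x : ℝ, Complex.exp (-Complex.I * ((x * ξ : ℝ) : ℂ)) * f x

/-- Sobolev norm ‖f‖_{H^s}. -/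
def HsNorm (s : ℝ) (f : ℝ → ℂ) : ℝ :=
  (∫ ξ : ℝ, (1 + ξ ^ 2) ^ s * ‖FT1 f ξ‖ ^ 2) ^ ((1 : ℝ) / 2)

/-- Kawahara free propagator (U(t)f)(x). -/
def Uprop (α β t : ℝ) (f : ℝ → ℂ) (x : ℝ) : ℂ :=
  (((Real.sqrt (2 * Real.pi))⁻¹ : ℝ) : ℂ) *
    ∫ ξ : ℝ, Complex.exp (Complex.I * ((x * ξ - t * kPhi α β ξ : ℝ) : ℂ)) * FT1 f ξ

/-- The constant a = max{1, (2|3β/(5α)|)^{1/2}}. -/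
def aConst (α β : ℝ) : ℝ := max 1 (Real.sqrt (2 * |3 * β / (5 * α)|))

/-- The Fourier multiplier operator Dₓ^θ P^D in the x-variable:
    multiplier |ξ|^θ · 1_{|ξ|≥D}. -/
def PD (D θ : ℝ) (u : ℝ × ℝ → ℂ) (p : ℝ × ℝ) : ℂ :=
  (((Real.sqrt (2 * Real.pi))⁻¹ : ℝ) : ℂ) *
    ∫ ξ : ℝ, Complex.exp (Complex.I * ((p.1 * ξ : ℝ) : ℂ)) *
      (((if D ≤ |ξ| then |ξ| ^ θ else 0 : ℝ)) : ℂ) * FT1 (fun y => u (y, p.2)) ξ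

/-- High-frequency projection P^D on functions of one variable. -/
def PDf (D : ℝ) (f : ℝ → ℂ) (x : ℝ) : ℂ :=
  (((Real.sqrt (2 * Real.pi))⁻¹ : ℝ) : ℂ) *
    ∫ ξ : ℝ, Complex.exp (Complex.I * ((x * ξ : ℝ) : ℂ)) *
      (((if D ≤ |ξ| then 1 else 0 : ℝ)) : ℂ) * FT1 f ξ

/-- lower bound on the maximal modulation. -/
theorem max_modulation_lower_bound (α β : ℝ) (hα : α ≠ 0) :
    ∃ C : ℝ, 0 < C ∧ ∀ ξ₁ ξ₂ τ₁ τ₂ : ℝ,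
      (2 * aConst α β ≤ |ξ₁ + ξ₂| ∨ 2 * aConst α β ≤ |ξ₁|) →
      C * |ξ₁ + ξ₂| * |ξ₁| * |ξ₂| * max ((ξ₁ + ξ₂) ^ 2) (ξ₁ ^ 2) ≤
        max |τ₁ + τ₂ + kPhi α β (ξ₁ + ξ₂)|
          (max |τ₁ + kPhi α β ξ₁| |τ₂ + kPhi α β ξ₂|) := by
  refine ⟨5 * |α| / 8, by positivity, ?_⟩
  intro ξ₁ ξ₂ τ₁ τ₂ h
  set a := aConst α β with ha
  have ha1 : (1 : ℝ) ≤ a := le_max_left _ _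
  have ha0 : (0 : ℝ) ≤ a := by linarith
  have ha2 : 2 * |3 * β / (5 * α)| ≤ a ^ 2 := by
    have h1 : Real.sqrt (2 * |3 * β / (5 * α)|) ≤ a := le_max_right _ _
    nlinarith [Real.sq_sqrt (by positivity : (0:ℝ) ≤ 2 * |3 * β / (5 * α)|),
      Real.sqrt_nonneg (2 * |3 * β / (5 * α)|)]
  have hαpos : 0 < |α| := abs_pos.mpr hα
  have hβ : 3 * |β| ≤ 5 * |α| * a ^ 2 / 2 := by
    have hr : |3 * β / (5 * α)| * (5 * |α|) = 3 * |β| := by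
      rw [abs_div]
      rw [show |(5:ℝ) * α| = 5 * |α| by rw [abs_mul]; norm_num,
        show |(3:ℝ) * β| = 3 * |β| by rw [abs_mul]; norm_num]
      field_simp
    nlinarith [abs_nonneg (3 * β / (5 * α))]
  set M := max ((ξ₁ + ξ₂) ^ 2) (ξ₁ ^ 2) with hM
  have hM1 : (ξ₁ + ξ₂) ^ 2 ≤ M := le_max_left _ _
  have hM2 : ξ₁ ^ 2 ≤ M := le_max_right _ _
  have hM0 : 0 ≤ M := le_trans (sq_nonneg _) hM2
  have hM4 : 4 * a ^ 2 ≤ M := by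
    rcases h with h | h
    · nlinarith [abs_nonneg (ξ₁ + ξ₂), sq_abs (ξ₁ + ξ₂)]
    · nlinarith [abs_nonneg ξ₁, sq_abs ξ₁]
  set Q := ξ₁ ^ 2 + ξ₁ * ξ₂ + ξ₂ ^ 2 with hQ
  have hQM : M / 2 ≤ Q := by
    rcases max_cases ((ξ₁ + ξ₂) ^ 2) (ξ₁ ^ 2) with ⟨he, _⟩ | ⟨he, _⟩ <;>
      rw [hM, he] <;> nlinarith [sq_nonneg (ξ₁ - ξ₂), sq_nonneg ξ₂, sq_nonneg (ξ₁ + ξ₂)]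
  have hQ0 : 0 ≤ Q := by nlinarith
  set A := τ₁ + τ₂ + kPhi α β (ξ₁ + ξ₂) with hA
  set B := τ₁ + kPhi α β ξ₁ with hB
  set C := τ₂ + kPhi α β ξ₂ with hC
  have hid : A - B - C = ξ₁ * ξ₂ * (ξ₁ + ξ₂) * (5 * α * Q - 3 * β) := by
    simp only [hA, hB, hC, hQ, kPhi]; ring
  have htri : |A - B - C| ≤ |A| + |B| + |C| := by
    refine abs_le.mpr ⟨?_, ?_⟩ <;>
      [ (linarith [neg_abs_le A, le_abs_self B, le_abs_self C]) ;
        (linarith [le_abs_self A, neg_abs_le B, neg_abs_le C]) ]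
  have habs : |A - B - C| = |ξ₁| * |ξ₂| * |ξ₁ + ξ₂| * |5 * α * Q - 3 * β| := by
    rw [hid, abs_mul, abs_mul, abs_mul]
  clear_value a M Q A B C
  have hfac : 15 * |α| * M / 8 ≤ |5 * α * Q - 3 * β| := by
    have h1 : |5 * α * Q| - |3 * β| ≤ |5 * α * Q - 3 * β| := abs_sub_abs_le_abs_sub _ _
    have h2 : |5 * α * Q| = 5 * |α| * Q := by
      rw [abs_mul, abs_mul, abs_of_nonneg hQ0]; norm_num
    have h3 : |3 * β| = 3 * |β| := by rw [abs_mul]; norm_num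
    rw [h2, h3] at h1
    linarith [mul_le_mul_of_nonneg_left hQM hαpos.le,
      mul_le_mul_of_nonneg_left hM4 hαpos.le]
  set mx := max |A| (max |B| |C|) with hmx
  have hmx1 : |A| ≤ mx := le_max_left _ _
  have hmx2 : |B| ≤ mx := le_trans (le_max_left _ _) (le_max_right _ _)
  have hmx3 : |C| ≤ mx := le_trans (le_max_right _ _) (le_max_right _ _)
  have hP : |ξ₁| * |ξ₂| * |ξ₁ + ξ₂| * (15 * |α| * M / 8) ≤ 3 * mx := by
    have h4 : |ξ₁| * |ξ₂| * |ξ₁ + ξ₂| * (15 * |α| * M / 8) ≤ |A - B - C| := by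
      rw [habs]
      exact mul_le_mul_of_nonneg_left hfac (by positivity)
    linarith
  calc 5 * |α| / 8 * |ξ₁ + ξ₂| * |ξ₁| * |ξ₂| * M
      = |ξ₁| * |ξ₂| * |ξ₁ + ξ₂| * (15 * |α| * M / 8) / 3 := by ring
    _ ≤ 3 * mx / 3 := by linarith
    _ = mx := by ring

end
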